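/- For every permutation π of {1,...,n} with n ≥ 1, there exists a unique absolutely irreducible permutation θ such that π is θ-decomposable. -/

import Mathlib

/-- `b : ℕ → ℕ` (used on `{0,...,k}`) gives a `θ`-decomposition of `π`:
`π` is cut into `k` nonempty consecutive blocks of positions
`[b i, b (i+1))`, each block's set of values is an interval of integers,
and the relative order of the blocks' value intervals agrees with `θ`. -/
structure IsDecomp {n k : ℕ} (π : Equiv.Perm (Fin n)) (θ : Equiv.Perm (Fin k))
    (b : ℕ → ℕ) : Prop where
  zero : b 0 = 0
  last : b k = n
  mono : ∀ i, i < k → b i < b (i + 1)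
  interval : ∀ i, i < k → ∃ lo : ℕ, ∀ p : Fin n, b i ≤ (p : ℕ) → (p : ℕ) < b (i + 1) →
    lo ≤ (π p : ℕ) ∧ (π p : ℕ) < lo + (b (i + 1) - b i)
  order : ∀ i j : Fin k, θ i < θ j → ∀ p q : Fin n,
    b (i : ℕ) ≤ (p : ℕ) → (p : ℕ) < b ((i : ℕ) + 1) →
    b (j : ℕ) ≤ (q : ℕ) → (q : ℕ) < b ((j : ℕ) + 1) → π p < π q

/-- `π` is `θ`-decomposable if some sequence of breakpoints realises a
`θ`-decomposition of `π`. -/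
def Decomposable {n k : ℕ} (π : Equiv.Perm (Fin n)) (θ : Equiv.Perm (Fin k)) : Prop :=
  ∃ b : ℕ → ℕ, IsDecomp π θ b

/-- The positions `[a, b)` form a block of `π`: a nonempty set of consecutive
positions whose values form an interval of integers. -/
def IsBlock {n : ℕ} (π : Equiv.Perm (Fin n)) (a b : ℕ) : Prop :=
  a < b ∧ b ≤ n ∧ ∃ lo : ℕ, ∀ p : Fin n, a ≤ (p : ℕ) → (p : ℕ) < b →
    lo ≤ (π p : ℕ) ∧ (π p : ℕ) < lo + (b - a)

/-- A proper block: a block which is not the whole of `π`. -/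
def ProperBlock {n : ℕ} (π : Equiv.Perm (Fin n)) (a b : ℕ) : Prop :=
  IsBlock π a b ∧ ¬ (a = 0 ∧ b = n)

/-- A permutation is absolutely irreducible (simple) if it has no proper block
consisting of at least two consecutive positions whose values form an interval. -/
def AbsIrred {n : ℕ} (π : Equiv.Perm (Fin n)) : Prop :=
  ¬ ∃ a b : ℕ, a + 2 ≤ b ∧ ProperBlock π a b

namespace PD
open Finset

variable {n : ℕ} (π : Equiv.Perm (Fin n))

def pos (n a b : ℕ) : Finset (Fin n) :=
  Finset.univ.filter (fun p : Fin n => a ≤ (p : ℕ) ∧ (p : ℕ) < b)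

def vals (a b : ℕ) : Finset ℕ := (pos n a b).image (fun p => ((π p : Fin n) : ℕ))

lemma mem_pos {a b : ℕ} {p : Fin n} : p ∈ pos n a b ↔ a ≤ (p:ℕ) ∧ (p:ℕ) < b := by
  simp [pos]

lemma mem_vals {a b y : ℕ} :
    y ∈ vals π a b ↔ ∃ p : Fin n, a ≤ (p:ℕ) ∧ (p:ℕ) < b ∧ ((π p : Fin n) : ℕ) = y := by
  simp [vals, mem_pos]; tauto

lemma image_val_pos {a b : ℕ} (hb : b ≤ n) :
    (pos n a b).image (fun p : Fin n => (p : ℕ)) = Finset.Ico a b := by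
  ext x
  simp only [mem_image, mem_pos, mem_Ico]
  constructor
  · rintro ⟨p, ⟨h1, h2⟩, rfl⟩; exact ⟨h1, h2⟩
  · rintro ⟨h1, h2⟩; exact ⟨⟨x, lt_of_lt_of_le h2 hb⟩, ⟨h1, h2⟩, rfl⟩

lemma card_pos {a b : ℕ} (hb : b ≤ n) : (pos n a b).card = b - a := by
  have := image_val_pos (n := n) (a := a) (b := b) hb
  have hc : (pos n a b).card = ((pos n a b).image (fun p : Fin n => (p : ℕ))).card :=
    (Finset.card_image_of_injective _ Fin.val_injective).symm
  rw [hc, this, Nat.card_Ico]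

lemma card_vals {a b : ℕ} (hb : b ≤ n) : (vals π a b).card = b - a := by
  rw [vals, Finset.card_image_of_injective _ (fun p q h => π.injective (Fin.val_injective h)),
    card_pos hb]

lemma vals_subset_range {a b : ℕ} : vals π a b ⊆ Finset.range n := by
  intro y hy
  rcases (mem_vals π).1 hy with ⟨p, _, _, rfl⟩
  exact Finset.mem_range.2 (π p).isLt

lemma vals_mono {a b a' b' : ℕ} (h1 : a' ≤ a) (h2 : b ≤ b') : vals π a b ⊆ vals π a' b' := by
  intro y hy
  rcases (mem_vals π).1 hy with ⟨p, hp1, hp2, rfl⟩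
  exact (mem_vals π).2 ⟨p, le_trans h1 hp1, lt_of_lt_of_le hp2 h2, rfl⟩

lemma vals_disjoint {a b c d : ℕ} (h : b ≤ c) : Disjoint (vals π a b) (vals π c d) := by
  rw [Finset.disjoint_left]
  intro y h1 h2
  rcases (mem_vals π).1 h1 with ⟨p, _, hp2, hpy⟩
  rcases (mem_vals π).1 h2 with ⟨q, hq1, _, hqy⟩
  have : p = q := π.injective (Fin.val_injective (by rw [hpy, hqy]))
  subst this; omega

lemma block_exact {a b : ℕ} (h : IsBlock π a b) :
    ∃ lo, vals π a b = Finset.Ico lo (lo + (b - a)) ∧ lo + (b - a) ≤ n := by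
  obtain ⟨hab, hbn, lo, hlo⟩ := h
  refine ⟨lo, ?_, ?_⟩
  · have hsub : vals π a b ⊆ Finset.Ico lo (lo + (b - a)) := by
      intro y hy
      rcases (mem_vals π).1 hy with ⟨p, h1, h2, rfl⟩
      exact Finset.mem_Ico.2 (hlo p h1 h2)
    refine Finset.eq_of_subset_of_card_le hsub ?_
    rw [Nat.card_Ico, card_vals π hbn]; omega
  · -- top value is < n
    have hne : (vals π a b).Nonempty := by
      refine ⟨(π ⟨a, lt_of_lt_of_le hab hbn⟩ : Fin n), (mem_vals π).2 ⟨_, le_refl _, hab, rfl⟩⟩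
    have htop : lo + (b - a) - 1 ∈ vals π a b := by
      have hsub : vals π a b = Finset.Ico lo (lo + (b - a)) := by
        have hsub : vals π a b ⊆ Finset.Ico lo (lo + (b - a)) := by
          intro y hy
          rcases (mem_vals π).1 hy with ⟨p, h1, h2, rfl⟩
          exact Finset.mem_Ico.2 (hlo p h1 h2)
        refine Finset.eq_of_subset_of_card_le hsub ?_
        rw [Nat.card_Ico, card_vals π hbn]; omega
      rw [hsub]; refine Finset.mem_Ico.2 (by omega)
    have := Finset.mem_range.1 (vals_subset_range π htop)
    omega

lemma isBlock_of_vals {a b lo : ℕ} (hab : a < b) (hbn : b ≤ n)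
    (h : vals π a b = Finset.Ico lo (lo + (b - a))) : IsBlock π a b := by
  refine ⟨hab, hbn, lo, fun p h1 h2 => ?_⟩
  have : ((π p : Fin n) : ℕ) ∈ vals π a b := (mem_vals π).2 ⟨p, h1, h2, rfl⟩
  rw [h] at this
  exact Finset.mem_Ico.1 this

end PD

namespace PD
open Finset
variable {n : ℕ} (π : Equiv.Perm (Fin n))

lemma vals_all : vals π 0 n = Finset.range n := by
  refine Finset.eq_of_subset_of_card_le (vals_subset_range π) ?_
  rw [card_vals π (le_refl n), Finset.card_range]; omega

lemma vals_compl {c : ℕ} (hc : c ≤ n) : vals π c n = Finset.range n \ vals π 0 c := by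
  have hu : vals π 0 c ∪ vals π c n = Finset.range n := by
    refine subset_antisymm (Finset.union_subset (vals_subset_range π) (vals_subset_range π)) ?_
    rw [← vals_all π]
    intro y hy
    rcases (mem_vals π).1 hy with ⟨p, _, hp2, rfl⟩
    rcases lt_or_ge (p : ℕ) c with h | h
    · exact Finset.mem_union_left _ ((mem_vals π).2 ⟨p, Nat.zero_le _, h, rfl⟩)
    · exact Finset.mem_union_right _ ((mem_vals π).2 ⟨p, h, hp2, rfl⟩)
  have hd : Disjoint (vals π 0 c) (vals π c n) := vals_disjoint π (le_refl c)
  rw [← hu, Finset.union_sdiff_cancel_left hd]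

/-- union of two properly overlapping blocks is a block -/
lemma block_union {a b c d : ℕ} (h1 : IsBlock π a b) (h2 : IsBlock π c d)
    (hac : a ≤ c) (hcb : c < b) (hbd : b ≤ d) : IsBlock π a d := by
  obtain ⟨lo1, hv1, hn1⟩ := block_exact π h1
  obtain ⟨lo2, hv2, hn2⟩ := block_exact π h2
  obtain ⟨hab, hbn, -⟩ := h1
  obtain ⟨hcd, hdn, -⟩ := h2
  have hcn : c < n := lt_of_lt_of_le hcd hdn
  set x := ((π ⟨c, hcn⟩ : Fin n) : ℕ) with hx
  have hx1 : x ∈ vals π a b := (mem_vals π).2 ⟨⟨c, hcn⟩, hac, hcb, rfl⟩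
  have hx2 : x ∈ vals π c d := (mem_vals π).2 ⟨⟨c, hcn⟩, le_refl _, hcd, rfl⟩
  rw [hv1, Finset.mem_Ico] at hx1
  rw [hv2, Finset.mem_Ico] at hx2
  have hvu : vals π a d = vals π a b ∪ vals π c d := by
    ext y
    simp only [mem_vals, Finset.mem_union]
    constructor
    · rintro ⟨p, hp1, hp2, rfl⟩
      rcases lt_or_ge (p : ℕ) b with h | h
      · exact Or.inl ⟨p, hp1, h, rfl⟩
      · exact Or.inr ⟨p, le_trans (le_of_lt hcb) h, hp2, rfl⟩
    · rintro (⟨p, hp1, hp2, rfl⟩ | ⟨p, hp1, hp2, rfl⟩)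
      · exact ⟨p, hp1, lt_of_lt_of_le hp2 hbd, rfl⟩
      · exact ⟨p, le_trans hac hp1, hp2, rfl⟩
  have hico : vals π a b ∪ vals π c d
      = Finset.Ico (min lo1 lo2) (max (lo1 + (b - a)) (lo2 + (d - c))) := by
    rw [hv1, hv2]
    ext y
    simp only [Finset.mem_union, Finset.mem_Ico]
    omega
  have hcard : (vals π a d).card = d - a := card_vals π hdn
  rw [hvu, hico, Nat.card_Ico] at hcard
  refine isBlock_of_vals π (by omega) hdn (lo := min lo1 lo2) ?_
  rw [hvu, hico]
  congr 1
  omega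

lemma convex_finset {s : Finset ℕ} (hne : s.Nonempty)
    (hcv : ∀ x ∈ s, ∀ z ∈ s, ∀ y, x ≤ y → y ≤ z → y ∈ s) :
    ∃ lo, s = Finset.Ico lo (lo + s.card) := by
  set m := s.min' hne with hm
  set M := s.max' hne with hM
  have hmM : m ≤ M := s.min'_le _ (s.max'_mem hne)
  have hIcc : ∀ y, y ∈ s ↔ m ≤ y ∧ y ≤ M := fun y =>
    ⟨fun hy => ⟨s.min'_le y hy, s.le_max' y hy⟩,
     fun h => hcv _ (s.min'_mem hne) _ (s.max'_mem hne) y h.1 h.2⟩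
  have h1 : s = Finset.Icc m M := by ext y; simp [hIcc y, Finset.mem_Icc]
  have hc : s.card = (Finset.Icc m M).card := congrArg Finset.card h1
  rw [Nat.card_Icc] at hc
  refine ⟨m, ?_⟩
  rw [hc]
  ext y
  rw [hIcc y, Finset.mem_Ico]
  omega

/-- a breakpoint system (decomposition without the pattern) -/
def Sys (π : Equiv.Perm (Fin n)) (k : ℕ) (b : ℕ → ℕ) : Prop :=
  b 0 = 0 ∧ b k = n ∧ (∀ i, i < k → b i < b (i + 1)) ∧ ∀ i, i < k → IsBlock π (b i) (b (i + 1))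

variable {k : ℕ} {b : ℕ → ℕ}

lemma mono_of (hm : ∀ i, i < k → b i < b (i + 1)) :
    ∀ i j, i ≤ j → j ≤ k → b i ≤ b j := by
  intro i j hij hjk
  induction j with
  | zero => simpa [Nat.le_zero.1 hij]
  | succ m ih =>
    rcases Nat.lt_or_ge i (m+1) with h | h
    · exact le_trans (ih (by omega) (by omega)) (le_of_lt (hm m (by omega)))
    · have : i = m + 1 := by omega
      simp [this]

lemma smono_of (hm : ∀ i, i < k → b i < b (i + 1)) :
    ∀ i j, i < j → j ≤ k → b i < b j := by
  intro i j hij hjk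
  exact lt_of_lt_of_le (hm i (by omega)) (mono_of hm (i+1) j (by omega) hjk)

lemma Sys.mono' (hs : Sys π k b) : ∀ i j, i ≤ j → j ≤ k → b i ≤ b j := mono_of hs.2.2.1
lemma Sys.smono (hs : Sys π k b) : ∀ i j, i < j → j ≤ k → b i < b j := smono_of hs.2.2.1

lemma Sys.locate (hs : Sys π k b) {u : ℕ} (hu : u < n) :
    ∃ i, i < k ∧ b i ≤ u ∧ u < b (i + 1) := by
  obtain ⟨h0, hl, hm, _⟩ := hs
  have hP : b 0 ≤ u := by omega
  set i := Nat.findGreatest (fun i => b i ≤ u) k with hi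
  have hspec : b i ≤ u :=
    Nat.findGreatest_spec (P := fun i => b i ≤ u) (Nat.zero_le k) hP
  have hik : i ≤ k := Nat.findGreatest_le k
  have hlt : i < k := by
    rcases Nat.eq_or_lt_of_le hik with h | h
    · exfalso; rw [h] at hspec; omega
    · exact h
  refine ⟨i, hlt, hspec, ?_⟩
  by_contra hcon
  push_neg at hcon
  exact Nat.findGreatest_is_greatest (P := fun i => b i ≤ u)
    (hi ▸ lt_add_one i) (by omega) hcon

lemma locate_unique (hm : ∀ i, i < k → b i < b (i + 1)) {u i j : ℕ}
    (hik : i < k) (hjk : j < k) (h1 : b i ≤ u) (h2 : u < b (i+1))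
    (h3 : b j ≤ u) (h4 : u < b (j+1)) : i = j := by
  by_contra hne
  rcases Nat.lt_or_ge i j with h | h
  · have := mono_of hm (i+1) j (by omega) (by omega); omega
  · have : j < i := by omega
    have := mono_of hm (j+1) i (by omega) (by omega); omega

lemma decomp_sys {θ : Equiv.Perm (Fin k)} (hd : IsDecomp π θ b) : Sys π k b := by
  refine ⟨hd.zero, hd.last, hd.mono, fun i hik => ?_⟩
  refine ⟨hd.mono i hik, ?_, hd.interval i hik⟩
  calc b (i+1) ≤ b k := mono_of hd.mono (i+1) k (by omega) (le_refl k)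
    _ = n := hd.last

/-- if the θ-values of the index interval [a,c) form an interval,
then the union of those blocks is a block of π -/
lemma blocks_merge {θ : Equiv.Perm (Fin k)} (hd : IsDecomp π θ b)
    {a c t : ℕ} (hac : a < c) (hck : c ≤ k)
    (ht : ∀ l : Fin k, a ≤ (l:ℕ) → (l:ℕ) < c →
      t ≤ ((θ l : Fin k):ℕ) ∧ ((θ l : Fin k):ℕ) < t + (c - a)) :
    IsBlock π (b a) (b c) := by
  have hs := decomp_sys π hd
  have hm := hd.mono
  have hbac : b a < b c := smono_of hm a c hac hck
  have hbcn : b c ≤ n := hd.last ▸ mono_of hm c k hck (le_refl k)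
  -- values of θ outside the index window lie outside [t, t + (c-a))
  have hout : ∀ l : Fin k, ¬ (a ≤ (l:ℕ) ∧ (l:ℕ) < c) →
      ((θ l : Fin k):ℕ) < t ∨ t + (c - a) ≤ ((θ l : Fin k):ℕ) := by
    intro l hl
    by_contra hcon
    push_neg at hcon
    have hmem : ((θ l : Fin k):ℕ) ∈ vals θ a c := by
      have hT : vals θ a c = Finset.Ico t (t + (c - a)) := by
        refine Finset.eq_of_subset_of_card_le ?_ ?_
        · intro y hy
          rcases (mem_vals θ).1 hy with ⟨l', h1, h2, rfl⟩
          exact Finset.mem_Ico.2 (ht l' h1 h2)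
        · rw [Nat.card_Ico, card_vals θ hck]; omega
      rw [hT]
      exact Finset.mem_Ico.2 ⟨hcon.1, hcon.2⟩
    rcases (mem_vals θ).1 hmem with ⟨l', h1, h2, hback⟩
    have : l' = l := θ.injective (Fin.val_injective hback)
    subst this
    exact hl ⟨h1, h2⟩
  -- the index window of a position inside the big block
  have hidx : ∀ p : Fin n, b a ≤ (p:ℕ) → (p:ℕ) < b c →
      ∃ l, l < k ∧ a ≤ l ∧ l < c ∧ b l ≤ (p:ℕ) ∧ (p:ℕ) < b (l+1) := by
    intro p h1 h2
    obtain ⟨l, hlk, hl1, hl2⟩ := hs.locate π p.isLt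
    refine ⟨l, hlk, ?_, ?_, hl1, hl2⟩
    · by_contra h; push_neg at h
      have : b (l+1) ≤ b a := mono_of hm (l+1) a (by omega) (by omega)
      omega
    · by_contra h; push_neg at h
      have : b c ≤ b l := mono_of hm c l h (by omega)
      omega
  -- convexity of the union's values
  have hcv : ∀ x ∈ vals π (b a) (b c), ∀ z ∈ vals π (b a) (b c), ∀ y, x ≤ y → y ≤ z →
      y ∈ vals π (b a) (b c) := by
    intro x hx z hz y hxy hyz
    rcases (mem_vals π).1 hx with ⟨p, hp1, hp2, rfl⟩
    rcases (mem_vals π).1 hz with ⟨r, hr1, hr2, rfl⟩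
    have hyn : y < n := lt_of_le_of_lt hyz (π r).isLt
    set q := π.symm ⟨y, hyn⟩ with hq
    have hπq : ((π q : Fin n):ℕ) = y := by rw [hq, Equiv.apply_symm_apply]
    obtain ⟨l, hlk, hl1, hl2⟩ := hs.locate π q.isLt
    by_cases hin : a ≤ l ∧ l < c
    · refine (mem_vals π).2 ⟨q, ?_, ?_, hπq⟩
      · exact le_trans (mono_of hm a l hin.1 (by omega)) hl1
      · exact lt_of_lt_of_le hl2 (mono_of hm (l+1) c hin.2 hck)
    · obtain ⟨lp, hlpk, hlp1, hlp2, hlp3, hlp4⟩ := hidx p hp1 hp2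
      obtain ⟨lr, hlrk, hlr1, hlr2, hlr3, hlr4⟩ := hidx r hr1 hr2
      rcases hout ⟨l, hlk⟩ hin with h | h
      · -- block of q lies entirely below: y < x, contradiction
        have hθ : θ ⟨l, hlk⟩ < θ ⟨lp, hlpk⟩ := by
          rw [Fin.lt_def]
          have := (ht ⟨lp, hlpk⟩ hlp1 hlp2).1
          omega
        have := hd.order ⟨l, hlk⟩ ⟨lp, hlpk⟩ hθ q p hl1 hl2 hlp3 hlp4
        rw [Fin.lt_def, hπq] at this
        omega
      · have hθ : θ ⟨lr, hlrk⟩ < θ ⟨l, hlk⟩ := by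
          rw [Fin.lt_def]
          have := (ht ⟨lr, hlrk⟩ hlr1 hlr2).2
          omega
        have := hd.order ⟨lr, hlrk⟩ ⟨l, hlk⟩ hθ r q hlr3 hlr4 hl1 hl2
        rw [Fin.lt_def, hπq] at this
        omega
  have hne : (vals π (b a) (b c)).Nonempty := by
    refine ⟨((π ⟨b a, lt_of_lt_of_le hbac hbcn⟩ : Fin n):ℕ),
      (mem_vals π).2 ⟨_, le_refl _, hbac, rfl⟩⟩
  obtain ⟨lo, hlo⟩ := convex_finset hne hcv
  rw [card_vals π hbcn] at hlo
  exact isBlock_of_vals π hbac hbcn hlo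

/-- conversely, an aligned block of π gives an interval of θ-values -/
lemma theta_block {θ : Equiv.Perm (Fin k)} (hd : IsDecomp π θ b)
    {i j : ℕ} (hij : i < j) (hjk : j ≤ k) (hB : IsBlock π (b i) (b j)) :
    ∃ t, ∀ l : Fin k, i ≤ (l:ℕ) → (l:ℕ) < j →
      t ≤ ((θ l : Fin k):ℕ) ∧ ((θ l : Fin k):ℕ) < t + (j - i) := by
  have hs := decomp_sys π hd
  have hm := hd.mono
  obtain ⟨lo, hv, hvn⟩ := block_exact π hB
  -- pick a representative position for each index
  have hrep : ∀ l : Fin k, ∃ p : Fin n, b (l:ℕ) ≤ (p:ℕ) ∧ (p:ℕ) < b ((l:ℕ)+1) := by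
    intro l
    have h1 : b (l:ℕ) < b ((l:ℕ)+1) := hm l l.isLt
    have h2 : b ((l:ℕ)+1) ≤ n := hd.last ▸ mono_of hm ((l:ℕ)+1) k (by omega) (le_refl k)
    exact ⟨⟨b (l:ℕ), by omega⟩, le_refl _, h1⟩
  -- each such value lies in the big block's interval
  have hval : ∀ l : Fin k, i ≤ (l:ℕ) → (l:ℕ) < j → ∀ p : Fin n,
      b (l:ℕ) ≤ (p:ℕ) → (p:ℕ) < b ((l:ℕ)+1) → ((π p : Fin n):ℕ) ∈ vals π (b i) (b j) := by
    intro l h1 h2 p hp1 hp2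
    refine (mem_vals π).2 ⟨p, le_trans (mono_of hm i (l:ℕ) h1 (by omega)) hp1,
      lt_of_lt_of_le hp2 (mono_of hm ((l:ℕ)+1) j h2 hjk), rfl⟩
  set T := vals θ i j with hT
  have hTcard : T.card = j - i := card_vals θ hjk
  have hTne : T.Nonempty := by
    refine ⟨((θ ⟨i, by omega⟩ : Fin k):ℕ), (mem_vals θ).2 ⟨⟨i, by omega⟩, le_refl _, hij, rfl⟩⟩
  have hcv : ∀ x ∈ T, ∀ z ∈ T, ∀ y, x ≤ y → y ≤ z → y ∈ T := by
    intro x hx z hz y hxy hyz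
    rcases (mem_vals θ).1 hx with ⟨l1, hl11, hl12, rfl⟩
    rcases (mem_vals θ).1 hz with ⟨l2, hl21, hl22, rfl⟩
    have hyk : y < k := lt_of_le_of_lt hyz (θ l2).isLt
    set l' := θ.symm ⟨y, hyk⟩ with hl'
    have hθl' : ((θ l' : Fin k):ℕ) = y := by rw [hl', Equiv.apply_symm_apply]
    by_cases hin : i ≤ (l':ℕ) ∧ (l':ℕ) < j
    · exact (mem_vals θ).2 ⟨l', hin.1, hin.2, hθl'⟩
    · exfalso
      rcases eq_or_lt_of_le hxy with h | hxy'
      · refine hin ?_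
        have : l' = l1 := θ.injective (Fin.val_injective (by rw [hθl', ← h]))
        rw [this]; exact ⟨hl11, hl12⟩
      rcases eq_or_lt_of_le hyz with h | hyz'
      · refine hin ?_
        have : l' = l2 := θ.injective (Fin.val_injective (by rw [hθl', h]))
        rw [this]; exact ⟨hl21, hl22⟩
      -- l' is strictly between in value but outside [i,j): contradiction via π values
      obtain ⟨p1, hp11, hp12⟩ := hrep l1
      obtain ⟨p2, hp21, hp22⟩ := hrep l2
      obtain ⟨p', hp'1, hp'2⟩ := hrep l'
      have h1 : π p1 < π p' := hd.order l1 l' (by rw [Fin.lt_def, hθl']; exact hxy')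
        p1 p' hp11 hp12 hp'1 hp'2
      have h2 : π p' < π p2 := hd.order l' l2 (by rw [Fin.lt_def, hθl']; exact hyz')
        p' p2 hp'1 hp'2 hp21 hp22
      have hv1 : ((π p1 : Fin n):ℕ) ∈ vals π (b i) (b j) := hval l1 hl11 hl12 p1 hp11 hp12
      have hv2 : ((π p2 : Fin n):ℕ) ∈ vals π (b i) (b j) := hval l2 hl21 hl22 p2 hp21 hp22
      rw [hv, Finset.mem_Ico] at hv1 hv2
      have hmem : ((π p' : Fin n):ℕ) ∈ vals π (b i) (b j) := by
        rw [hv, Finset.mem_Ico]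
        rw [Fin.lt_def] at h1 h2
        omega
      rcases (mem_vals π).1 hmem with ⟨p'', h1'', h2'', h3''⟩
      have : p'' = p' := π.injective (Fin.val_injective h3'')
      subst this
      -- so p' lies in [b i, b j), hence l' ∈ [i, j)
      refine hin ⟨?_, ?_⟩
      · by_contra h; push_neg at h
        have : b ((l':ℕ)+1) ≤ b i := mono_of hm ((l':ℕ)+1) i (by omega) (by omega)
        omega
      · by_contra h; push_neg at h
        have : b j ≤ b (l':ℕ) := mono_of hm j (l':ℕ) h (by omega)
        omega
  obtain ⟨t, ht⟩ := convex_finset hTne hcv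
  rw [hTcard] at ht
  refine ⟨t, fun l h1 h2 => ?_⟩
  have : ((θ l : Fin k):ℕ) ∈ T := (mem_vals θ).2 ⟨l, h1, h2, rfl⟩
  rw [ht, Finset.mem_Ico] at this
  exact this

lemma vals_pair_disjoint (hs : Sys π k b) {i j : ℕ} (hik : i < k) (hjk : j < k) (hne : i ≠ j) :
    Disjoint (vals π (b i) (b (i+1))) (vals π (b j) (b (j+1))) := by
  rcases Nat.lt_or_ge i j with h | h
  · exact vals_disjoint π (hs.mono' π (i+1) j h (by omega))
  · exact (vals_disjoint π (hs.mono' π (j+1) i (by omega) (by omega))).symm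

/-- from a breakpoint system, construct the pattern -/
lemma mk_decomp (hs : Sys π k b) : ∃ θ : Equiv.Perm (Fin k), IsDecomp π θ b := by
  have hblock := hs.2.2.2
  have hmono := hs.2.2.1
  have hexact : ∀ i : Fin k, ∃ lo, vals π (b (i:ℕ)) (b ((i:ℕ)+1))
      = Finset.Ico lo (lo + (b ((i:ℕ)+1) - b (i:ℕ)))
      ∧ lo + (b ((i:ℕ)+1) - b (i:ℕ)) ≤ n :=
    fun i => block_exact π (hblock i i.isLt)
  choose f hf hfn using hexact
  have hlomem : ∀ i : Fin k, f i ∈ vals π (b (i:ℕ)) (b ((i:ℕ)+1)) := by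
    intro i
    rw [hf i]
    refine Finset.mem_Ico.2 ⟨le_refl _, ?_⟩
    have := hmono i i.isLt
    omega
  have hfinj : Function.Injective f := by
    intro i j hij
    by_contra hne
    have h1 := hlomem i
    have h2 := hlomem j
    rw [hij] at h1
    exact (Finset.disjoint_left.1
      (vals_pair_disjoint π hs i.isLt j.isLt (fun h => hne (Fin.val_injective h))) h1) h2
  set s : Finset ℕ := Finset.univ.image f with hsdef
  have hscard : s.card = k := by
    rw [hsdef, Finset.card_image_of_injective _ hfinj, Finset.card_univ, Fintype.card_fin]
  set e := s.orderIsoOfFin hscard with he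
  set g : Fin k → Fin k := fun i => e.symm ⟨f i, by
    rw [hsdef]; exact Finset.mem_image_of_mem f (Finset.mem_univ i)⟩ with hg
  have hglt : ∀ i j : Fin k, (g i < g j ↔ f i < f j) := by
    intro i j
    rw [hg]
    simp only []
    rw [e.symm.lt_iff_lt]
    rfl
  have hginj : Function.Injective g := by
    intro i j hij
    rw [hg] at hij
    simp only [] at hij
    have := e.symm.injective hij
    exact hfinj (Subtype.mk_eq_mk.1 this)
  refine ⟨Equiv.ofBijective g (Finite.injective_iff_bijective.mp hginj), ?_⟩
  refine ⟨hs.1, hs.2.1, hmono, fun i hik => (hblock i hik).2.2, ?_⟩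
  intro i j hθ p q hp1 hp2 hq1 hq2
  have hfij : f i < f j := (hglt i j).1 hθ
  have hij : i ≠ j := fun h => by rw [h] at hfij; omega
  -- value intervals are disjoint, so separated
  have hsep : f i + (b ((i:ℕ)+1) - b (i:ℕ)) ≤ f j := by
    by_contra hcon
    push_neg at hcon
    have h1 : f j ∈ vals π (b (i:ℕ)) (b ((i:ℕ)+1)) := by
      rw [hf i]; exact Finset.mem_Ico.2 ⟨le_of_lt hfij, hcon⟩
    exact (Finset.disjoint_left.1
      (vals_pair_disjoint π hs i.isLt j.isLt (fun h => hij (Fin.val_injective h))) h1)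
      (hlomem j)
  have hpv : ((π p : Fin n):ℕ) ∈ vals π (b (i:ℕ)) (b ((i:ℕ)+1)) :=
    (mem_vals π).2 ⟨p, hp1, hp2, rfl⟩
  have hqv : ((π q : Fin n):ℕ) ∈ vals π (b (j:ℕ)) (b ((j:ℕ)+1)) :=
    (mem_vals π).2 ⟨q, hq1, hq2, rfl⟩
  rw [hf i, Finset.mem_Ico] at hpv
  rw [hf j, Finset.mem_Ico] at hqv
  rw [Fin.lt_def]
  omega

def SimpleSys (π : Equiv.Perm (Fin n)) (k : ℕ) (b : ℕ → ℕ) : Prop :=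
  ∀ i j, i < j → j ≤ k → IsBlock π (b i) (b j) → j = i + 1 ∨ (i = 0 ∧ j = k)

lemma simple_of_absIrred {θ : Equiv.Perm (Fin k)} (hd : IsDecomp π θ b)
    (ha : AbsIrred θ) : SimpleSys π k b := by
  intro i j h1 h2 hB
  by_contra hcon
  push_neg at hcon
  obtain ⟨t, ht⟩ := theta_block π hd h1 h2 hB
  refine ha ⟨i, j, by omega, ⟨⟨h1, h2, t, fun p hp1 hp2 => ht p hp1 hp2⟩, fun hh => hcon.2 hh.1 hh.2⟩⟩

lemma absIrred_of_simple {θ : Equiv.Perm (Fin k)} (hd : IsDecomp π θ b)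
    (hss : SimpleSys π k b) : AbsIrred θ := by
  rintro ⟨a, c, hac2, ⟨hac, hck, t, hbound⟩, hproper⟩
  have hB : IsBlock π (b a) (b c) :=
    blocks_merge π hd hac hck (fun l h1 h2 => hbound l h1 h2)
  rcases hss a c hac hck hB with h | h
  · omega
  · exact hproper h

/-- any block not inside a single part must span all parts -/
lemma span (hs : Sys π k b) (hss : SimpleSys π k b) {u v : ℕ} (hB : IsBlock π u v)
    (hnc : ¬ ∃ i, i < k ∧ b i ≤ u ∧ v ≤ b (i + 1)) : u < b 1 ∧ b (k-1) < v := by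
  obtain ⟨huv, hvn, -⟩ := id hB
  have hblock := hs.2.2.2
  obtain ⟨i, hik, hi1, hi2⟩ := hs.locate π (show u < n by omega)
  obtain ⟨j, hjk, hj1, hj2⟩ := hs.locate π (show v - 1 < n by omega)
  have hij : i < j := by
    by_contra hcon2
    push_neg at hcon2
    have hle : b (j+1) ≤ b (i+1) := hs.mono' π (j+1) (i+1) (by omega) (by omega)
    exact hnc ⟨i, hik, hi1, by omega⟩
  have hbj : b j ≤ v - 1 := hj1
  have step1 : IsBlock π (b i) v := by
    refine block_union π (hblock i hik) hB hi1 hi2 ?_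
    have := hs.mono' π (i+1) j (by omega) (by omega)
    omega
  have step2 : IsBlock π (b i) (b (j+1)) := by
    refine block_union π step1 (hblock j hjk) (hs.mono' π i j (by omega) (by omega))
      (by omega) (by omega)
  rcases hss i (j+1) (by omega) (by omega) step2 with h | h
  · omega
  · obtain ⟨h0, hjk'⟩ := h
    subst h0
    constructor
    · exact hi2
    · have hkj : k - 1 = j := by omega
      rw [hkj]; omega

def SumDec (π : Equiv.Perm (Fin n)) : Prop :=
  ∃ c, 0 < c ∧ c < n ∧ vals π 0 c = Finset.Ico 0 c

def SkewDec (π : Equiv.Perm (Fin n)) : Prop :=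
  ∃ c, 0 < c ∧ c < n ∧ vals π 0 c = Finset.Ico (n - c) n

lemma Sys.rep (hs : Sys π k b) {i : ℕ} (hik : i < k) :
    ∃ p : Fin n, b i ≤ (p:ℕ) ∧ (p:ℕ) < b (i+1) := by
  have h1 : b i < b (i+1) := hs.2.2.1 i hik
  have h2 : b (i+1) ≤ n := hs.2.1 ▸ hs.mono' π (i+1) k (by omega) (le_refl k)
  exact ⟨⟨b i, by omega⟩, le_refl _, h1⟩

lemma order_lt {θ : Equiv.Perm (Fin k)} (hd : IsDecomp π θ b) {i j : Fin k} (hij : i ≠ j)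
    {p q : Fin n} (hp1 : b (i:ℕ) ≤ (p:ℕ)) (hp2 : (p:ℕ) < b ((i:ℕ)+1))
    (hq1 : b (j:ℕ) ≤ (q:ℕ)) (hq2 : (q:ℕ) < b ((j:ℕ)+1))
    (hlt : ((π p : Fin n):ℕ) < ((π q : Fin n):ℕ)) : θ i < θ j := by
  rcases lt_trichotomy (θ i) (θ j) with h | h | h
  · exact h
  · exact absurd (θ.injective h) hij
  · have := hd.order j i h q p hq1 hq2 hp1 hp2
    rw [Fin.lt_def] at this
    omega

lemma theta_top {θ : Equiv.Perm (Fin k)} (i0 : Fin k)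
    (h : ∀ j : Fin k, j ≠ i0 → θ j < θ i0) : ((θ i0 : Fin k):ℕ) = k - 1 := by
  have hk : 0 < k := i0.pos
  set j0 := θ.symm ⟨k-1, by omega⟩ with hj0
  have hθj0 : ((θ j0 : Fin k):ℕ) = k - 1 := by rw [hj0, Equiv.apply_symm_apply]
  rcases eq_or_ne j0 i0 with hh | hh
  · rw [← hh]; exact hθj0
  · have := h j0 hh
    rw [Fin.lt_def, hθj0] at this
    have := (θ i0).isLt
    omega

lemma theta_bot {θ : Equiv.Perm (Fin k)} (i0 : Fin k)
    (h : ∀ j : Fin k, j ≠ i0 → θ i0 < θ j) : ((θ i0 : Fin k):ℕ) = 0 := by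
  have hk : 0 < k := i0.pos
  set j0 := θ.symm ⟨0, by omega⟩ with hj0
  have hθj0 : ((θ j0 : Fin k):ℕ) = 0 := by rw [hj0, Equiv.apply_symm_apply]
  rcases eq_or_ne j0 i0 with hh | hh
  · rw [← hh]; exact hθj0
  · have := h j0 hh
    rw [Fin.lt_def, hθj0] at this
    omega

lemma k2_of_extreme {k : ℕ} (θ : Equiv.Perm (Fin k)) (hk : 2 ≤ k) (ha : AbsIrred θ)
    (i0 : Fin k) (h1 : (i0:ℕ) = 0 ∨ (i0:ℕ) = k - 1)
    (h2 : ((θ i0 : Fin k):ℕ) = 0 ∨ ((θ i0 : Fin k):ℕ) = k - 1) : k = 2 := by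
  by_contra hk2
  have hk3 : 3 ≤ k := by omega
  set lo : ℕ := if ((θ i0 : Fin k):ℕ) = 0 then 1 else 0 with hlo
  have hbound : ∀ p : Fin k, p ≠ i0 → lo ≤ ((θ p : Fin k):ℕ) ∧ ((θ p : Fin k):ℕ) < lo + (k-1) := by
    intro p hp
    have hne : ((θ p : Fin k):ℕ) ≠ ((θ i0 : Fin k):ℕ) := by
      intro h
      exact hp (θ.injective (Fin.val_injective h))
    have := (θ p).isLt
    rcases h2 with h | h
    · rw [hlo, if_pos h]; omega
    · rw [hlo, if_neg (by omega)]; omega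
  rcases h1 with h | h
  · -- positions [1, k) form a proper block of θ
    refine ha ⟨1, k, by omega, ⟨⟨by omega, le_refl k, lo, fun p hp1 hp2 => ?_⟩, by omega⟩⟩
    exact hbound p (fun hcon => by rw [hcon, h] at hp1; omega)
  · -- positions [0, k-1) form a proper block of θ
    refine ha ⟨0, k-1, by omega, ⟨⟨by omega, by omega, lo, fun p hp1 hp2 => ?_⟩, by omega⟩⟩
    exact hbound p (fun hcon => by rw [hcon, h] at hp2; omega)

lemma sum_case {θ : Equiv.Perm (Fin k)} (hd : IsDecomp π θ b) (hk : 2 ≤ k)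
    (ha : AbsIrred θ) (hsum : SumDec π) :
    k = 2 ∧ ∀ h : 0 < k, ((θ ⟨0, h⟩ : Fin k):ℕ) = 0 := by
  obtain ⟨c, hc0, hcn, hvc⟩ := hsum
  have hs := decomp_sys π hd
  have hss := simple_of_absIrred π hd ha
  have h0 := hd.zero
  have hn := hd.last
  have hblock := hs.2.2.2
  have hb01 : b (0 + 1) = b 1 := by norm_num
  have hb1 : 0 < b 1 := by have := hd.mono 0 (by omega); omega
  have hb1n : b 1 ≤ n := hn ▸ hs.mono' π 1 k (by omega) (le_refl k)
  have hnpos : 0 < n := by omega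
  rcases le_or_gt c (b 1) with hcA | hcB
  · -- the cut is inside the first part: first part has the lowest values
    obtain ⟨lo, hv, hvn⟩ := block_exact π (hblock 0 (by omega))
    rw [h0] at hv
    have h0mem : (0:ℕ) ∈ vals π 0 (b (0+1)) := by
      refine vals_mono π (le_refl 0) hcA ?_
      rw [hvc]
      exact Finset.mem_Ico.2 ⟨le_refl 0, hc0⟩
    rw [hv, Finset.mem_Ico] at h0mem
    have hlo0 : lo = 0 := by omega
    have hmin : ∀ j : Fin k, j ≠ ⟨0, by omega⟩ → θ ⟨0, by omega⟩ < θ j := by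
      intro j hj
      obtain ⟨q, hq1, hq2⟩ := hs.rep π j.isLt
      have hp1 : b (0:ℕ) ≤ ((⟨0, hnpos⟩ : Fin n):ℕ) := by simp [h0]
      have hp2 : ((⟨0, hnpos⟩ : Fin n):ℕ) < b (0+1) := by
        show (0:ℕ) < b (0+1); omega
      have hqv : ((π q : Fin n):ℕ) ∉ vals π (b 0) (b (0+1)) := by
        intro hmem
        have hd2 := vals_pair_disjoint π hs (show 0 < k by omega) j.isLt
          (fun hc => hj (Fin.val_injective hc.symm))
        exact (Finset.disjoint_left.1 hd2 hmem) ((mem_vals π).2 ⟨q, hq1, hq2, rfl⟩)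
      rw [h0, hv, hlo0, Finset.mem_Ico] at hqv
      push_neg at hqv
      have hqn := (π q).isLt
      have hpv : ((π ⟨0, hnpos⟩ : Fin n):ℕ) ∈ vals π 0 (b (0+1)) :=
        (mem_vals π).2 ⟨⟨0, hnpos⟩, Nat.zero_le _, by show (0:ℕ) < b (0+1); omega, rfl⟩
      rw [hv, hlo0, Finset.mem_Ico] at hpv
      refine order_lt π hd (Ne.symm hj) hp1 hp2 hq1 hq2 ?_
      have := hqv (by omega)
      omega
    have hbot := theta_bot _ hmin
    have hk2 := k2_of_extreme θ hk ha ⟨0, by omega⟩ (Or.inl rfl) (Or.inl hbot)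
    exact ⟨hk2, fun h => hbot⟩
  · -- the cut is beyond the first part: [0, c) spans, last part has top values
    have hZ : IsBlock π 0 c := by
      refine ⟨hc0, le_of_lt hcn, 0, fun p hp1 hp2 => ?_⟩
      have : ((π p : Fin n):ℕ) ∈ vals π 0 c := (mem_vals π).2 ⟨p, hp1, hp2, rfl⟩
      rw [hvc, Finset.mem_Ico] at this
      omega
    have hnc : ¬ ∃ i, i < k ∧ b i ≤ 0 ∧ c ≤ b (i+1) := by
      rintro ⟨i, hik, hi1, hi2⟩
      rcases Nat.eq_zero_or_pos i with rfl | hipos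
      · omega
      · have : b 1 ≤ b i := hs.mono' π 1 i hipos (by omega)
        omega
    obtain ⟨-, hspan2⟩ := span π hs hss hZ hnc
    have hcompl : vals π c n = Finset.Ico c n := by
      rw [vals_compl π (le_of_lt hcn), hvc]
      ext y
      simp only [Finset.mem_sdiff, Finset.mem_range, Finset.mem_Ico]
      omega
    obtain ⟨lo, hv, hvn⟩ := block_exact π (hblock (k-1) (by omega))
    have hk1 : k - 1 + 1 = k := by omega
    rw [hk1, hn] at hv hvn
    have hsub : Finset.Ico c n ⊆ Finset.Ico lo (lo + (n - b (k-1))) := by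
      rw [← hcompl, ← hv]
      exact vals_mono π (le_of_lt hspan2) (le_refl n)
    have htopmem : n - 1 ∈ Finset.Ico lo (lo + (n - b (k-1))) :=
      hsub (Finset.mem_Ico.2 ⟨by omega, by omega⟩)
    rw [Finset.mem_Ico] at htopmem
    have hbk1n : b (k-1) < n := by omega
    have hloeq : lo = b (k-1) := by omega
    have hmax : ∀ j : Fin k, j ≠ ⟨k-1, by omega⟩ → θ j < θ ⟨k-1, by omega⟩ := by
      intro j hj
      obtain ⟨q, hq1, hq2⟩ := hs.rep π j.isLt
      obtain ⟨p, hp1, hp2⟩ := hs.rep π (show k - 1 < k by omega)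
      have hqv : ((π q : Fin n):ℕ) ∉ vals π (b (k-1)) (b (k-1+1)) := by
        intro hmem
        have hd2 := vals_pair_disjoint π hs (show k-1 < k by omega) j.isLt
          (fun hc => hj (Fin.val_injective hc.symm))
        exact (Finset.disjoint_left.1 hd2 hmem) ((mem_vals π).2 ⟨q, hq1, hq2, rfl⟩)
      rw [hk1, hn, hv, hloeq, Finset.mem_Ico] at hqv
      push_neg at hqv
      have hqn := (π q).isLt
      have hpv : ((π p : Fin n):ℕ) ∈ vals π (b (k-1)) (b (k-1+1)) :=
        (mem_vals π).2 ⟨p, hp1, hp2, rfl⟩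
      rw [hk1, hn, hv, hloeq, Finset.mem_Ico] at hpv
      have hqlt : ((π q : Fin n):ℕ) < b (k-1) := by
        by_contra hcc
        push_neg at hcc
        have := hqv hcc
        omega
      exact order_lt π hd hj hq1 hq2 hp1 hp2 (by omega)
    have htop := theta_top _ hmax
    have hk2 := k2_of_extreme θ hk ha ⟨k-1, by omega⟩ (Or.inr rfl) (Or.inr htop)
    refine ⟨hk2, fun h => ?_⟩
    have hne : ((θ ⟨0, h⟩ : Fin k):ℕ) ≠ ((θ ⟨k-1, by omega⟩ : Fin k):ℕ) := by
      intro hcon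
      have := congrArg Fin.val (θ.injective (Fin.val_injective hcon))
      simp at this
      omega
    have := (θ ⟨0, h⟩).isLt
    omega

lemma skew_case {θ : Equiv.Perm (Fin k)} (hd : IsDecomp π θ b) (hk : 2 ≤ k)
    (ha : AbsIrred θ) (hskew : SkewDec π) :
    k = 2 ∧ ∀ h : 0 < k, ((θ ⟨0, h⟩ : Fin k):ℕ) = 1 := by
  obtain ⟨c, hc0, hcn, hvc⟩ := hskew
  have hs := decomp_sys π hd
  have hss := simple_of_absIrred π hd ha
  have h0 := hd.zero
  have hn := hd.last
  have hblock := hs.2.2.2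
  have hb01 : b (0 + 1) = b 1 := by norm_num
  have hb1 : 0 < b 1 := by have := hd.mono 0 (by omega); omega
  have hb1n : b 1 ≤ n := hn ▸ hs.mono' π 1 k (by omega) (le_refl k)
  have hnpos : 0 < n := by omega
  rcases le_or_gt c (b 1) with hcA | hcB
  · -- first part has the top values
    obtain ⟨lo, hv, hvn⟩ := block_exact π (hblock 0 (by omega))
    rw [h0] at hv
    have htmem : (n-1:ℕ) ∈ vals π 0 (b (0+1)) := by
      refine vals_mono π (le_refl 0) hcA ?_
      rw [hvc]
      exact Finset.mem_Ico.2 ⟨by omega, by omega⟩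
    rw [hv, Finset.mem_Ico] at htmem
    have hloeq : lo = n - b (0+1) := by omega
    have hmax : ∀ j : Fin k, j ≠ ⟨0, by omega⟩ → θ j < θ ⟨0, by omega⟩ := by
      intro j hj
      obtain ⟨q, hq1, hq2⟩ := hs.rep π j.isLt
      have hp1 : b (0:ℕ) ≤ ((⟨0, hnpos⟩ : Fin n):ℕ) := by simp [h0]
      have hp2 : ((⟨0, hnpos⟩ : Fin n):ℕ) < b (0+1) := by
        show (0:ℕ) < b (0+1); omega
      have hqv : ((π q : Fin n):ℕ) ∉ vals π (b 0) (b (0+1)) := by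
        intro hmem
        have hd2 := vals_pair_disjoint π hs (show 0 < k by omega) j.isLt
          (fun hc => hj (Fin.val_injective hc.symm))
        exact (Finset.disjoint_left.1 hd2 hmem) ((mem_vals π).2 ⟨q, hq1, hq2, rfl⟩)
      rw [h0, hv, hloeq, Finset.mem_Ico] at hqv
      push_neg at hqv
      have hqn := (π q).isLt
      have hpv : ((π ⟨0, hnpos⟩ : Fin n):ℕ) ∈ vals π 0 (b (0+1)) :=
        (mem_vals π).2 ⟨⟨0, hnpos⟩, Nat.zero_le _, by show (0:ℕ) < b (0+1); omega, rfl⟩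
      rw [hv, hloeq, Finset.mem_Ico] at hpv
      have hqlt : ((π q : Fin n):ℕ) < n - b (0+1) := by
        by_contra hcc
        push_neg at hcc
        have := hqv hcc
        omega
      exact order_lt π hd hj hq1 hq2 hp1 hp2 (by omega)
    have htop := theta_top _ hmax
    have hk2 := k2_of_extreme θ hk ha ⟨0, by omega⟩ (Or.inl rfl) (Or.inr htop)
    exact ⟨hk2, fun h => by rw [htop]; omega⟩
  · -- [0, c) spans; last part has the lowest values
    have hZ : IsBlock π 0 c := by
      refine ⟨hc0, le_of_lt hcn, n - c, fun p hp1 hp2 => ?_⟩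
      have : ((π p : Fin n):ℕ) ∈ vals π 0 c := (mem_vals π).2 ⟨p, hp1, hp2, rfl⟩
      rw [hvc, Finset.mem_Ico] at this
      omega
    have hnc : ¬ ∃ i, i < k ∧ b i ≤ 0 ∧ c ≤ b (i+1) := by
      rintro ⟨i, hik, hi1, hi2⟩
      rcases Nat.eq_zero_or_pos i with rfl | hipos
      · omega
      · have : b 1 ≤ b i := hs.mono' π 1 i hipos (by omega)
        omega
    obtain ⟨-, hspan2⟩ := span π hs hss hZ hnc
    have hcompl : vals π c n = Finset.Ico 0 (n - c) := by
      rw [vals_compl π (le_of_lt hcn), hvc]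
      ext y
      simp only [Finset.mem_sdiff, Finset.mem_range, Finset.mem_Ico]
      omega
    obtain ⟨lo, hv, hvn⟩ := block_exact π (hblock (k-1) (by omega))
    have hk1 : k - 1 + 1 = k := by omega
    rw [hk1, hn] at hv hvn
    have hbk1n : b (k-1) < n := by
      have := hs.smono π (k-1) k (by omega) (le_refl k); omega
    have hsub : Finset.Ico 0 (n - c) ⊆ Finset.Ico lo (lo + (n - b (k-1))) := by
      rw [← hcompl, ← hv]
      exact vals_mono π (le_of_lt hspan2) (le_refl n)
    have hbotmem : (0:ℕ) ∈ Finset.Ico lo (lo + (n - b (k-1))) :=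
      hsub (Finset.mem_Ico.2 ⟨le_refl 0, by omega⟩)
    rw [Finset.mem_Ico] at hbotmem
    have hloeq : lo = 0 := by omega
    have hmin : ∀ j : Fin k, j ≠ ⟨k-1, by omega⟩ → θ ⟨k-1, by omega⟩ < θ j := by
      intro j hj
      obtain ⟨q, hq1, hq2⟩ := hs.rep π j.isLt
      obtain ⟨p, hp1, hp2⟩ := hs.rep π (show k - 1 < k by omega)
      have hqv : ((π q : Fin n):ℕ) ∉ vals π (b (k-1)) (b (k-1+1)) := by
        intro hmem
        have hd2 := vals_pair_disjoint π hs (show k-1 < k by omega) j.isLt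
          (fun hc => hj (Fin.val_injective hc.symm))
        exact (Finset.disjoint_left.1 hd2 hmem) ((mem_vals π).2 ⟨q, hq1, hq2, rfl⟩)
      rw [hk1, hn, hv, hloeq, Finset.mem_Ico] at hqv
      push_neg at hqv
      have hqn := (π q).isLt
      have hpv : ((π p : Fin n):ℕ) ∈ vals π (b (k-1)) (b (k-1+1)) :=
        (mem_vals π).2 ⟨p, hp1, hp2, rfl⟩
      rw [hk1, hn, hv, hloeq, Finset.mem_Ico] at hpv
      have hqge : n - b (k-1) ≤ ((π q : Fin n):ℕ) := by have := hqv (Nat.zero_le _); omega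
      exact order_lt π hd (Ne.symm hj) hp1 hp2 hq1 hq2 (by omega)
    have hbot := theta_bot _ hmin
    have hk2 := k2_of_extreme θ hk ha ⟨k-1, by omega⟩ (Or.inr rfl) (Or.inl hbot)
    refine ⟨hk2, fun h => ?_⟩
    have hne : ((θ ⟨0, h⟩ : Fin k):ℕ) ≠ ((θ ⟨k-1, by omega⟩ : Fin k):ℕ) := by
      intro hcon
      have := congrArg Fin.val (θ.injective (Fin.val_injective hcon))
      simp at this
      omega
    have := (θ ⟨0, h⟩).isLt
    omega

lemma compl_compl' {s : Finset ℕ} (h : s ⊆ Finset.range n) :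
    Finset.range n \ (Finset.range n \ s) = s := by
  ext y
  simp only [Finset.mem_sdiff, Finset.mem_range]
  constructor
  · rintro ⟨h1, h2⟩
    by_contra hc
    exact h2 ⟨h1, hc⟩
  · intro hy
    exact ⟨Finset.mem_range.1 (h hy), fun hh => hh.2 hy⟩

/-- if some part of one decomposition spans the other decomposition,
then π is sum- or skew-decomposable -/
lemma span_block_cases {k k' : ℕ} {b b' : ℕ → ℕ} (hs : Sys π k b) (hss : SimpleSys π k b)
    (hs' : Sys π k' b') (hss' : SimpleSys π k' b') (hk : 2 ≤ k) (hk' : 2 ≤ k')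
    {j : ℕ} (hjk : j < k') (hsp1 : b' j < b 1) (hsp2 : b (k-1) < b' (j+1)) :
    SumDec π ∨ SkewDec π := by
  have h0 := hs.1
  have hn := hs.2.1
  have h0' := hs'.1
  have hn' := hs'.2.1
  have hb1k1 : b 1 ≤ b (k-1) := hs.mono' π 1 (k-1) (by omega) (by omega)
  have hb1pos : 0 < b 1 := by have := hs.2.2.1 0 (by omega); omega
  have hb1n : b 1 ≤ n := hn ▸ hs.mono' π 1 k (by omega) (le_refl k)
  have hbk1n : b (k-1) < n := by have := hs.smono π (k-1) k (by omega) (le_refl k); omega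
  have hnpos : 0 < n := by omega
  have hb'01 : b' (0+1) = b' 1 := by norm_num
  have hb'1pos : 0 < b' 1 := by have := hs'.2.2.1 0 (by omega); omega
  rcases Nat.eq_zero_or_pos j with rfl | hjpos
  · -- j = 0 : the spanning part is [0, b' 1)
    have hvn' : b' 1 < n := by
      have h2 := hs'.smono π 1 k' (by omega) (le_refl k')
      omega
    have hBZ : IsBlock π 0 (b' 1) := by
      have := hs'.2.2.2 0 (by omega)
      rwa [h0', hb'01] at this
    obtain ⟨lo, hv, hvn⟩ := block_exact π hBZ
    have hv' : vals π 0 (b' 1) = Finset.Ico lo (lo + b' 1) := by rw [hv]; congr 1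
    rcases Nat.eq_zero_or_pos lo with hlo | hlo
    · refine Or.inl ⟨b' 1, by omega, hvn', ?_⟩
      rw [hv', hlo]
      congr 1
      omega
    rcases Nat.eq_or_lt_of_le (show lo + b' 1 ≤ n by omega) with hhi | hhi
    · refine Or.inr ⟨b' 1, by omega, hvn', ?_⟩
      rw [hv']
      congr 1
      omega
    · -- middle interval: impossible
      exfalso
      obtain ⟨m, hm, hmn⟩ := block_exact π (hs.2.2.2 (k-1) (by omega))
      have hk1 : k - 1 + 1 = k := by omega
      rw [hk1, hn] at hm hmn
      have hsubc : vals π (b' 1) n ⊆ Finset.Ico m (m + (n - b (k-1))) := by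
        rw [← hm]
        exact vals_mono π (by omega) (le_refl n)
      have h0mem : (0:ℕ) ∈ vals π (b' 1) n := by
        rw [vals_compl π (le_of_lt hvn'), Finset.mem_sdiff, hv', Finset.mem_Ico]
        exact ⟨Finset.mem_range.2 hnpos, by omega⟩
      have htmem : (n-1:ℕ) ∈ vals π (b' 1) n := by
        rw [vals_compl π (le_of_lt hvn'), Finset.mem_sdiff, hv', Finset.mem_Ico]
        exact ⟨Finset.mem_range.2 (by omega), by omega⟩
      have h1 := Finset.mem_Ico.1 (hsubc h0mem)
      have h2 := Finset.mem_Ico.1 (hsubc htmem)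
      omega
  rcases Nat.eq_or_lt_of_le (show j + 1 ≤ k' by omega) with hjtop | hjmid
  · -- j = k' - 1 : the spanning part is [b' j, n)
    have hupos : 0 < b' j := by
      have := hs'.mono' π 1 j hjpos (by omega)
      omega
    have hun : b' j < n := by omega
    have hBZ : IsBlock π (b' j) n := by
      have := hs'.2.2.2 j hjk
      rwa [hjtop, hn'] at this
    obtain ⟨lo, hv, hvn⟩ := block_exact π hBZ
    rw [vals_compl π (le_of_lt hun)] at hv
    have hcc := compl_compl' (vals_subset_range π (a := 0) (b := b' j))
    rcases Nat.eq_or_lt_of_le (show lo + (n - b' j) ≤ n from hvn) with hhi | hhi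
    · -- values of [u,n) are the top interval : sum-decomposable at u
      refine Or.inl ⟨b' j, hupos, hun, ?_⟩
      rw [← hcc, hv]
      ext y
      simp only [Finset.mem_sdiff, Finset.mem_Ico, Finset.mem_range]
      omega
    rcases Nat.eq_zero_or_pos lo with hlo | hlo
    · -- values of [u,n) are the bottom interval : skew-decomposable at u
      refine Or.inr ⟨b' j, hupos, hun, ?_⟩
      rw [← hcc, hv, hlo]
      ext y
      simp only [Finset.mem_sdiff, Finset.mem_Ico, Finset.mem_range]
      omega
    · exfalso
      obtain ⟨m, hm, hmn⟩ := block_exact π (hs.2.2.2 0 (by omega))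
      rw [h0] at hm
      have hb01 : b (0+1) = b 1 := by norm_num
      have hcv : vals π 0 (b' j) ⊆ Finset.Ico m (m + (b (0+1) - 0)) := by
        rw [← hm]
        exact vals_mono π (le_refl 0) (by omega)
      have hvc' : vals π 0 (b' j) = Finset.range n \ Finset.Ico lo (lo + (n - b' j)) := by
        rw [← hcc, hv]
      have h0mem : (0:ℕ) ∈ vals π 0 (b' j) := by
        rw [hvc', Finset.mem_sdiff, Finset.mem_Ico]
        exact ⟨Finset.mem_range.2 hnpos, by omega⟩
      have htmem : (n-1:ℕ) ∈ vals π 0 (b' j) := by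
        rw [hvc', Finset.mem_sdiff, Finset.mem_Ico]
        exact ⟨Finset.mem_range.2 (by omega), by omega⟩
      have h1 := Finset.mem_Ico.1 (hcv h0mem)
      have h2 := Finset.mem_Ico.1 (hcv htmem)
      omega
  · -- middle j : contradiction
    exfalso
    have hB0 : IsBlock π 0 (b 1) := by
      have := hs.2.2.2 0 (by omega)
      have hb01 : b (0+1) = b 1 := by norm_num
      rwa [h0, hb01] at this
    have hnc : ¬ ∃ i, i < k' ∧ b' i ≤ 0 ∧ b 1 ≤ b' (i+1) := by
      rintro ⟨i, hik', h1, h2⟩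
      rcases Nat.eq_zero_or_pos i with rfl | hipos
      · have : b' (0+1) ≤ b' j := hs'.mono' π (0+1) j (by omega) (by omega)
        omega
      · have : b' 1 ≤ b' i := hs'.mono' π 1 i hipos (by omega)
        omega
    obtain ⟨-, h2'⟩ := span π hs' hss' hB0 hnc
    have : b' (j+1) ≤ b' (k'-1) := hs'.mono' π (j+1) (k'-1) (by omega) (by omega)
    omega

lemma Sys.le_b (hs : Sys π k b) : ∀ i, i ≤ k → i ≤ b i := by
  intro i
  induction i with
  | zero => omega
  | succ m ih =>
    intro h
    have h1 := ih (by omega)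
    have h2 := hs.2.2.1 m (by omega)
    omega

lemma sys_singletons : Sys π n (fun i => i) := by
  refine ⟨rfl, rfl, fun i hik => Nat.lt_succ_self i, fun i hik => ?_⟩
  refine ⟨Nat.lt_succ_self i, hik, ((π ⟨i, hik⟩ : Fin n):ℕ), fun p hp1 hp2 => ?_⟩
  have hp1' : i ≤ (p:ℕ) := hp1
  have hp2' : (p:ℕ) < i + 1 := hp2
  have : p = ⟨i, hik⟩ := Fin.val_injective (show (p:ℕ) = i by omega)
  subst this
  exact ⟨le_refl _, Nat.lt_add_of_pos_right (by show (0:ℕ) < i + 1 - i; omega)⟩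

lemma merge_sys (hs : Sys π k b) {i j : ℕ} (hij : i < j) (hjk : j ≤ k)
    (hB : IsBlock π (b i) (b j)) :
    ∃ b'' : ℕ → ℕ, Sys π (k + i + 1 - j) b'' := by
  refine ⟨fun l => if l ≤ i then b l else b (l + j - i - 1), ?_, ?_, ?_, ?_⟩
  · show (if (0:ℕ) ≤ i then b 0 else b (0 + j - i - 1)) = 0
    rw [if_pos (Nat.zero_le i)]
    exact hs.1
  · show (if k + i + 1 - j ≤ i then b (k + i + 1 - j) else b (k + i + 1 - j + j - i - 1)) = n
    rw [if_neg (show ¬ (k + i + 1 - j ≤ i) by omega)]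
    have harg : k + i + 1 - j + j - i - 1 = k := by omega
    rw [harg]
    exact hs.2.1
  · intro l hl
    show (if l ≤ i then b l else b (l + j - i - 1)) <
      (if l + 1 ≤ i then b (l + 1) else b (l + 1 + j - i - 1))
    rcases Nat.lt_or_ge l i with h | h
    · rw [if_pos (show l ≤ i by omega), if_pos (show l + 1 ≤ i by omega)]
      exact hs.2.2.1 l (by omega)
    rcases Nat.eq_or_lt_of_le h with h' | h'
    · rw [if_pos (show l ≤ i by omega), if_neg (show ¬ (l + 1 ≤ i) by omega)]
      have harg : l + 1 + j - i - 1 = j := by omega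
      rw [harg, ← h']
      exact hs.smono π i j hij hjk
    · rw [if_neg (show ¬ (l ≤ i) by omega), if_neg (show ¬ (l + 1 ≤ i) by omega)]
      have harg : l + 1 + j - i - 1 = (l + j - i - 1) + 1 := by omega
      rw [harg]
      exact hs.2.2.1 (l + j - i - 1) (by omega)
  · intro l hl
    show IsBlock π (if l ≤ i then b l else b (l + j - i - 1))
      (if l + 1 ≤ i then b (l + 1) else b (l + 1 + j - i - 1))
    rcases Nat.lt_or_ge l i with h | h
    · rw [if_pos (show l ≤ i by omega), if_pos (show l + 1 ≤ i by omega)]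
      exact hs.2.2.2 l (by omega)
    rcases Nat.eq_or_lt_of_le h with h' | h'
    · rw [if_pos (show l ≤ i by omega), if_neg (show ¬ (l + 1 ≤ i) by omega)]
      have harg : l + 1 + j - i - 1 = j := by omega
      rw [harg]
      exact h' ▸ hB
    · rw [if_neg (show ¬ (l ≤ i) by omega), if_neg (show ¬ (l + 1 ≤ i) by omega)]
      have harg : l + 1 + j - i - 1 = (l + j - i - 1) + 1 := by omega
      rw [harg]
      exact hs.2.2.2 (l + j - i - 1) (by omega)

lemma breakpoints_eq {k k' : ℕ} {b b' : ℕ → ℕ}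
    (hs : Sys π k b) (hss : SimpleSys π k b) (hs' : Sys π k' b') (hss' : SimpleSys π k' b')
    (hk : 2 ≤ k) (hk' : 2 ≤ k') (hnosum : ¬ SumDec π) (hnoskew : ¬ SkewDec π) :
    k' = k ∧ ∀ j, j ≤ k → b' j = b j := by
  have hcont : ∀ j, j < k' → ∃ i, i < k ∧ b i ≤ b' j ∧ b' (j+1) ≤ b (i+1) := by
    intro j hj
    by_contra hno
    have hB := hs'.2.2.2 j hj
    obtain ⟨sp1, sp2⟩ := span π hs hss hB hno
    rcases span_block_cases π hs hss hs' hss' hk hk' hj sp1 sp2 with h | h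
    · exact hnosum h
    · exact hnoskew h
  have hcont' : ∀ j, j < k → ∃ i, i < k' ∧ b' i ≤ b j ∧ b (j+1) ≤ b' (i+1) := by
    intro j hj
    by_contra hno
    have hB := hs.2.2.2 j hj
    obtain ⟨sp1, sp2⟩ := span π hs' hss' hB hno
    rcases span_block_cases π hs' hss' hs hss hk' hk hj sp1 sp2 with h | h
    · exact hnosum h
    · exact hnoskew h
  have hind : ∀ j, j ≤ k' → j ≤ k ∧ b' j = b j := by
    intro j
    induction j with
    | zero => exact fun _ => ⟨by omega, by rw [hs'.1, hs.1]⟩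
    | succ m ih =>
      intro hm1
      obtain ⟨hmk, hbm⟩ := ih (by omega)
      have hmk' : m < k' := by omega
      have hmlt : m < k := by
        rcases Nat.eq_or_lt_of_le hmk with h | h
        · exfalso
          subst h
          have h1 : b' m < b' (m+1) := hs'.2.2.1 m hmk'
          have h2 : b' (m+1) ≤ b' k' := hs'.mono' π (m+1) k' hm1 (le_refl k')
          have e1 := hs.2.1
          have e2 := hs'.2.1
          omega
        · exact h
      obtain ⟨i, hik, h1, h2⟩ := hcont m hmk'
      have hmono := hs.2.2.1
      have hbm' : b' m < b (i+1) := by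
        have := hs'.2.2.1 m hmk'
        omega
      have hieq : i = m := locate_unique hmono hik hmlt (hbm ▸ h1) (hbm ▸ hbm')
        (le_refl (b m)) (hs.2.2.1 m hmlt)
      obtain ⟨i', hik', h1', h2'⟩ := hcont' m hmlt
      have hbm'' : b m < b' (i'+1) := by
        have := hs.2.2.1 m hmlt
        omega
      have hieq' : i' = m := locate_unique hs'.2.2.1 hik' hmk' h1' hbm''
        (le_of_eq hbm) (by rw [← hbm]; exact hs'.2.2.1 m hmk')
      subst hieq
      subst hieq'
      exact ⟨by omega, by omega⟩
  have hkk : k' = k := by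
    have h1 := (hind k' (le_refl k')).1
    rcases Nat.eq_or_lt_of_le h1 with h | h
    · exact h
    · exfalso
      have h2 := (hind k' (le_refl k')).2
      rw [hs'.2.1] at h2
      have := hs.smono π k' k h (le_refl k)
      rw [hs.2.1] at this
      omega
  exact ⟨hkk, fun j hj => (hind j (by omega)).2⟩

lemma pattern_eq {k : ℕ} {b b' : ℕ → ℕ} {θ θ' : Equiv.Perm (Fin k)}
    (hd : IsDecomp π θ b) (hd' : IsDecomp π θ' b') (hbb : ∀ j, j ≤ k → b' j = b j) :
    θ' = θ := by
  have hs := decomp_sys π hd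
  have hmono : ∀ i j : Fin k, θ i < θ j → θ' i < θ' j := by
    intro i j hθ
    obtain ⟨p, hp1, hp2⟩ := hs.rep π i.isLt
    obtain ⟨q, hq1, hq2⟩ := hs.rep π j.isLt
    have hpq := hd.order i j hθ p q hp1 hp2 hq1 hq2
    have hij : i ≠ j := by
      intro h
      rw [h] at hθ
      exact lt_irrefl _ hθ
    refine order_lt π hd' hij (p := p) (q := q) ?_ ?_ ?_ ?_ ?_
    · rw [hbb (i:ℕ) (by omega)]; exact hp1
    · rw [hbb ((i:ℕ)+1) (by omega)]; exact hp2
    · rw [hbb (j:ℕ) (by omega)]; exact hq1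
    · rw [hbb ((j:ℕ)+1) (by omega)]; exact hq2
    · rw [Fin.lt_def] at hpq; omega
  have hsm : StrictMono (fun x => θ' (θ.symm x)) := by
    intro x y hxy
    refine hmono (θ.symm x) (θ.symm y) ?_
    rw [Equiv.apply_symm_apply, Equiv.apply_symm_apply]
    exact hxy
  have hid : (fun x => θ' (θ.symm x)) = id := by
    refine (StrictMono.range_inj hsm strictMono_id).1 ?_
    rw [Set.range_id]
    exact (θ.symm.trans θ').surjective.range_eq
  ext i
  have := congrFun hid (θ i)
  simp only [Equiv.symm_apply_apply, id_eq] at this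
  rw [this]

lemma perm_eq_k2 {k : ℕ} (hk : k = 2) (θ θ' : Equiv.Perm (Fin k))
    (h : ∀ h0 : 0 < k, ((θ ⟨0, h0⟩ : Fin k):ℕ) = ((θ' ⟨0, h0⟩ : Fin k):ℕ)) : θ' = θ := by
  subst hk
  have h0 := h (by omega)
  refine Equiv.ext (fun x => ?_)
  have hx := x.isLt
  have hcase : (x:ℕ) = 0 ∨ (x:ℕ) = 1 := by omega
  rcases hcase with hc | hc
  · have hx0 : x = ⟨0, by omega⟩ := Fin.val_injective hc
    rw [hx0]
    exact Fin.val_injective h0.symm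
  · have hx1 : x = ⟨1, by omega⟩ := Fin.val_injective hc
    rw [hx1]
    have hne : ((θ (⟨1, by omega⟩ : Fin 2) : Fin 2):ℕ) ≠ ((θ (⟨0, by omega⟩ : Fin 2) : Fin 2):ℕ) := by
      intro hcc
      have := congrArg Fin.val (θ.injective (Fin.val_injective hcc))
      simp at this
    have hne' : ((θ' (⟨1, by omega⟩ : Fin 2) : Fin 2):ℕ) ≠ ((θ' (⟨0, by omega⟩ : Fin 2) : Fin 2):ℕ) := by
      intro hcc
      have := congrArg Fin.val (θ'.injective (Fin.val_injective hcc))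
      simp at this
    have i1 := (θ (⟨1, by omega⟩ : Fin 2)).isLt
    have i2 := (θ' (⟨1, by omega⟩ : Fin 2)).isLt
    have i3 := (θ (⟨0, by omega⟩ : Fin 2)).isLt
    exact Fin.val_injective (by omega)

end PD

/-- For every permutation `π` of `{1,...,n}` with `n ≥ 1` there is a unique
absolutely irreducible permutation `θ` such that `π` is `θ`-decomposable
(where, for `n ≥ 2`, the trivial one-block decomposition is not considered). -/
theorem exists_unique_absIrred_decomposition (n : ℕ) (hn : 1 ≤ n)
    (π : Equiv.Perm (Fin n)) :
    ∃ (k : ℕ) (θ : Equiv.Perm (Fin k)), (2 ≤ k ∨ n = 1) ∧ AbsIrred θ ∧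
      Decomposable π θ ∧
      ∀ (k' : ℕ) (θ' : Equiv.Perm (Fin k')), (2 ≤ k' ∨ n = 1) → AbsIrred θ' →
        Decomposable π θ' → k' = k ∧ HEq θ' θ := by
  classical
  open PD in
  rcases Nat.eq_or_lt_of_le hn with h1 | h2
  · -- n = 1
    have hn1 : n = 1 := h1.symm
    subst hn1
    obtain ⟨θ0, hd0⟩ := PD.mk_decomp π (PD.sys_singletons π)
    refine ⟨1, θ0, Or.inr rfl, ?_, ⟨fun i => i, hd0⟩, ?_⟩
    · rintro ⟨a, c, h2, ⟨⟨hac, hck, -⟩, -⟩⟩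
      omega
    · rintro k' θ' hdisj ha' ⟨b', hd'⟩
      have hs' := PD.decomp_sys π hd'
      have hle := hs'.le_b π k' (le_refl k')
      rw [hs'.2.1] at hle
      have hk'pos : k' ≠ 0 := by
        intro h
        have h1 := hs'.1
        have h2 := hs'.2.1
        rw [h] at h2
        omega
      have hk1 : k' = 1 := by omega
      subst hk1
      exact ⟨rfl, heq_of_eq (Subsingleton.elim θ' θ0)⟩
  · -- n ≥ 2
    have hex : ∃ k, 2 ≤ k ∧ ∃ b : ℕ → ℕ, PD.Sys π k b :=
      ⟨n, h2, fun i => i, PD.sys_singletons π⟩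
    obtain ⟨hk2, b, hsys⟩ := Nat.find_spec hex
    have hmin : ∀ m, m < Nat.find hex → ¬(2 ≤ m ∧ ∃ b : ℕ → ℕ, PD.Sys π m b) :=
      fun m hm => Nat.find_min hex hm
    have hss : PD.SimpleSys π (Nat.find hex) b := by
      intro i j hij hjk hB
      by_contra hcon
      push_neg at hcon
      obtain ⟨hne1, hne2⟩ := hcon
      have hk'' : 2 ≤ Nat.find hex + i + 1 - j ∧ Nat.find hex + i + 1 - j < Nat.find hex := by
        rcases Nat.eq_zero_or_pos i with rfl | hipos
        · have := hne2 rfl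
          omega
        · omega
      exact hmin _ hk''.2 ⟨hk''.1, PD.merge_sys π hsys hij hjk hB⟩
    obtain ⟨θ, hd⟩ := PD.mk_decomp π hsys
    have ha : AbsIrred θ := PD.absIrred_of_simple π hd hss
    refine ⟨Nat.find hex, θ, Or.inl hk2, ha, ⟨b, hd⟩, ?_⟩
    rintro k' θ' hdisj' ha' ⟨b', hd'⟩
    have hk2' : 2 ≤ k' := hdisj'.resolve_right (by omega)
    have hs' := PD.decomp_sys π hd'
    have hss' := PD.simple_of_absIrred π hd' ha'
    by_cases hsum : PD.SumDec π
    · obtain ⟨hkk, hθ0⟩ := PD.sum_case π hd hk2 ha hsum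
      obtain ⟨hkk', hθ0'⟩ := PD.sum_case π hd' hk2' ha' hsum
      have hkeq : k' = Nat.find hex := by omega
      subst hkeq
      refine ⟨rfl, heq_of_eq (PD.perm_eq_k2 hkk θ θ' ?_)⟩
      intro h0
      rw [hθ0 h0, hθ0' h0]
    by_cases hskew : PD.SkewDec π
    · obtain ⟨hkk, hθ0⟩ := PD.skew_case π hd hk2 ha hskew
      obtain ⟨hkk', hθ0'⟩ := PD.skew_case π hd' hk2' ha' hskew
      have hkeq : k' = Nat.find hex := by omega
      subst hkeq
      refine ⟨rfl, heq_of_eq (PD.perm_eq_k2 hkk θ θ' ?_)⟩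
      intro h0
      rw [hθ0 h0, hθ0' h0]
    · obtain ⟨hkk, hbb⟩ := PD.breakpoints_eq π hsys hss hs' hss' hk2 hk2' hsum hskew
      subst hkk
      exact ⟨rfl, heq_of_eq (PD.pattern_eq π hd hd' hbb)⟩
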